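/- Let ζ be a nonnegative integrable function on [0,1] satisfying the one-dimensional Perron–Frobenius equation ζ(x) = g₀'(x) ζ(g₀(x)) + g₁'(x) ζ(g₁(x)) a.e., and suppose moreover that g₀'(z) ζ(g₀(z)) = g₁'(z) ζ(g₁(z)) for a.e. z ∈ [0,1]. Then the product density ρ(x,y) = ζ(x) ζ(y) is an invariant density for F. -/

import Mathlib

open Set MeasureTheory

/-- A nonnegative integrable function `ρ` on `[0,1]²` is an *invariant density* for the
triangular map `F` built from `f₀, f₁, g₀, g₁` if it satisfies the Perron–Frobenius
fixed-point equation almost everywhere on the square. -/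
def IsInvariantDensity (f₀ f₁ g₀ g₁ : ℝ → ℝ) (ρ : ℝ × ℝ → ℝ) : Prop :=
  (∀ p ∈ Set.Icc (0:ℝ) 1 ×ˢ Set.Icc (0:ℝ) 1, 0 ≤ ρ p) ∧
  MeasureTheory.IntegrableOn ρ (Set.Icc 0 1 ×ˢ Set.Icc 0 1) ∧
  (∀ᵐ p ∂(MeasureTheory.volume.restrict (Set.Icc (0:ℝ) 1 ×ˢ Set.Icc (0:ℝ) 1)),
    (p.2 < 1/2 → ρ p = deriv g₀ p.1 * deriv f₀ p.2 * ρ (g₀ p.1, f₀ p.2)) ∧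
    (1/2 ≤ p.2 → ρ p = deriv g₁ p.1 * deriv f₁ p.2 * ρ (g₁ p.1, f₁ p.2)))


/-- Image of a null set under a function Lipschitz on a set is null (in ℝ). -/
lemma null_image_of_lipschitzOn {g : ℝ → ℝ} {s : Set ℝ} {K : NNReal}
    (h : LipschitzOnWith K g s) {N : Set ℝ} (hN : volume N = 0) :
    volume (g '' (N ∩ s)) = 0 := by
  have h' := (h.mono (inter_subset_right (s := N))).hausdorffMeasure_image_le (zero_le_one (α := ℝ))
  rw [MeasureTheory.hausdorffMeasure_real] at h'
  have hz : volume (N ∩ s) = 0 := measure_mono_null inter_subset_left hN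
  rw [hz, mul_zero] at h'
  exact le_antisymm h' zero_le

/-- An inverse of an α-expanding map is (α⁻¹)-Lipschitz. -/
lemma lipschitzOn_inverse {g f : ℝ → ℝ} {s t : Set ℝ} {α : ℝ} (hα : 0 < α)
    (hmaps : MapsTo g s t)
    (hright : ∀ y ∈ s, f (g y) = y)
    (hexp : ∀ x ∈ t, ∀ y ∈ t, x ≤ y → α * (y - x) ≤ f y - f x) :
    LipschitzOnWith (Real.toNNReal α⁻¹) g s := by
  apply LipschitzOnWith.of_dist_le_mul
  have hco : (Real.toNNReal α⁻¹ : ℝ) = α⁻¹ := Real.coe_toNNReal _ (by positivity)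
  have key : ∀ a ∈ s, ∀ b ∈ s, g a ≤ g b → dist (g a) (g b) ≤ α⁻¹ * dist a b := by
    intro a ha b hb hab
    have h1 := hexp _ (hmaps ha) _ (hmaps hb) hab
    rw [hright a ha, hright b hb] at h1
    rw [Real.dist_eq, Real.dist_eq]
    have hba : a ≤ b := by nlinarith
    rw [abs_sub_comm, abs_of_nonneg (by linarith), abs_sub_comm (a := a), abs_of_nonneg (by linarith)]
    rw [inv_mul_eq_div, le_div_iff₀ hα]
    nlinarith
  intro a ha b hb
  rw [hco]
  rcases le_total (g a) (g b) with hle | hle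
  · exact key a ha b hb hle
  · rw [dist_comm, dist_comm a b]; exact key b hb a ha hle

/-- If `ζ` solves the one-dimensional Perron–Frobenius equation
and moreover the two branch contributions balance,
`g₀'(z) ζ(g₀ z) = g₁'(z) ζ(g₁ z)` a.e., then the product density
`ρ(x,y) = ζ(x) ζ(y)` is an invariant density for `F`. -/
theorem product_density_invariant_of_branch_balance
    (α : ℝ) (hα : 1 < α)
    (f₀ f₁ g₀ g₁ : ℝ → ℝ)
    (hf₀C : ContDiffOn ℝ 2 f₀ (Icc 0 (1/2)))
    (hf₀0 : f₀ 0 = 0) (hf₀half : f₀ (1/2) = 1)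
    (hf₀deriv : ∀ x ∈ Icc (0:ℝ) (1/2), α ≤ deriv f₀ x)
    (hf₀maps : MapsTo f₀ (Icc 0 (1/2)) (Icc 0 1))
    (hf₁ : ∀ x, f₁ x = 1 - f₀ (1 - x))
    (hg₀maps : MapsTo g₀ (Icc 0 1) (Icc 0 (1/2)))
    (hg₁maps : MapsTo g₁ (Icc 0 1) (Icc (1/2) 1))
    (hg₀left : ∀ x ∈ Icc (0:ℝ) (1/2), g₀ (f₀ x) = x)
    (hg₀right : ∀ y ∈ Icc (0:ℝ) 1, f₀ (g₀ y) = y)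
    (hg₁left : ∀ x ∈ Icc (1/2:ℝ) 1, g₁ (f₁ x) = x)
    (hg₁right : ∀ y ∈ Icc (0:ℝ) 1, f₁ (g₁ y) = y)
    (ζ : ℝ → ℝ)
    (hζpos : ∀ x ∈ Icc (0:ℝ) 1, 0 ≤ ζ x)
    (hζint : IntegrableOn ζ (Icc 0 1))
    (hζPF : ∀ᵐ x ∂(volume.restrict (Icc (0:ℝ) 1)),
      ζ x = deriv g₀ x * ζ (g₀ x) + deriv g₁ x * ζ (g₁ x))
    (hbal : ∀ᵐ z ∂(volume.restrict (Icc (0:ℝ) 1)),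
      deriv g₀ z * ζ (g₀ z) = deriv g₁ z * ζ (g₁ z)) :
    IsInvariantDensity f₀ f₁ g₀ g₁ (fun p => ζ p.1 * ζ p.2) := by
  have hα0 : (0:ℝ) < α := lt_trans one_pos hα
  have hf₁fun : f₁ = fun x => 1 - f₀ (1 - x) := funext hf₁
  -- expansion of f₀
  have hcont : ContinuousOn f₀ (Icc 0 (1/2)) := hf₀C.continuousOn
  have hdiff : DifferentiableOn ℝ f₀ (interior (Icc (0:ℝ) (1/2))) :=
    (hf₀C.differentiableOn (by norm_num)).mono interior_subset
  have hexp : ∀ x ∈ Icc (0:ℝ) (1/2), ∀ y ∈ Icc (0:ℝ) (1/2), x ≤ y →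
      α * (y - x) ≤ f₀ y - f₀ x :=
    (convex_Icc _ _).mul_sub_le_image_sub_of_le_deriv hcont hdiff
      (fun x hx => hf₀deriv x (interior_subset hx))
  -- expansion of f₁ on [1/2,1]
  have hexp₁ : ∀ x ∈ Icc (1/2:ℝ) 1, ∀ y ∈ Icc (1/2:ℝ) 1, x ≤ y →
      α * (y - x) ≤ f₁ y - f₁ x := by
    intro x hx y hy hxy
    have h1x : (1 - y) ∈ Icc (0:ℝ) (1/2) := ⟨by linarith [hy.2], by linarith [hy.1]⟩
    have h1y : (1 - x) ∈ Icc (0:ℝ) (1/2) := ⟨by linarith [hx.2], by linarith [hx.1]⟩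
    have := hexp _ h1x _ h1y (by linarith)
    rw [hf₁ x, hf₁ y]
    linarith
  -- Lipschitz inverses
  set K : NNReal := Real.toNNReal α⁻¹ with hK
  have hLip₀ : LipschitzOnWith K g₀ (Icc 0 1) :=
    lipschitzOn_inverse hα0 hg₀maps hg₀right hexp
  have hLip₁ : LipschitzOnWith K g₁ (Icc 0 1) :=
    lipschitzOn_inverse hα0 hg₁maps hg₁right hexp₁
  -- f₀ has derivative at interior points
  have hDf : ∀ y ∈ Ioo (0:ℝ) (1/2), HasDerivAt f₀ (deriv f₀ y) y := by
    intro y hy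
    exact ((hf₀C.differentiableOn (by norm_num)).differentiableAt
      (Icc_mem_nhds hy.1 hy.2)).hasDerivAt
  have hDf₁ : ∀ y ∈ Ioo (1/2:ℝ) 1, HasDerivAt f₁ (deriv f₀ (1 - y)) y := by
    intro y hy
    have hy' : (1 - y) ∈ Ioo (0:ℝ) (1/2) := ⟨by linarith [hy.2], by linarith [hy.1]⟩
    have h1 : HasDerivAt (fun x : ℝ => 1 - x) (-1) y := by
      simpa using (hasDerivAt_id y).const_sub 1
    have h2 := (hDf _ hy').comp y h1
    have h3 := h2.const_sub 1
    rw [hf₁fun]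
    simpa using h3
  have hf₀mem : ∀ y ∈ Ioo (0:ℝ) (1/2), f₀ y ∈ Ioo (0:ℝ) 1 := by
    intro y hy
    have h1 := hexp 0 (by norm_num) y (Ioo_subset_Icc_self hy) hy.1.le
    have h2 := hexp y (Ioo_subset_Icc_self hy) (1/2) (by norm_num) hy.2.le
    rw [hf₀0] at h1; rw [hf₀half] at h2
    constructor <;> nlinarith [hy.1, hy.2]
  have hf₁mem : ∀ y ∈ Ioo (1/2:ℝ) 1, f₁ y ∈ Ioo (0:ℝ) 1 := by
    intro y hy
    have hy' : (1 - y) ∈ Ioo (0:ℝ) (1/2) := ⟨by linarith [hy.2], by linarith [hy.1]⟩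
    have := hf₀mem _ hy'
    rw [hf₁ y]
    exact ⟨by linarith [this.2], by linarith [this.1]⟩
  have hdf₀pos : ∀ y ∈ Icc (0:ℝ) (1/2), 0 < deriv f₀ y :=
    fun y hy => lt_of_lt_of_le hα0 (hf₀deriv y hy)
  -- derivative of inverses
  have hg₀d : ∀ y ∈ Ioo (0:ℝ) (1/2), deriv g₀ (f₀ y) = (deriv f₀ y)⁻¹ := by
    intro y hy
    have ha := hf₀mem y hy
    have hc : ContinuousAt g₀ (f₀ y) :=
      hLip₀.continuousOn.continuousAt (Icc_mem_nhds ha.1 ha.2)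
    have hfy : HasDerivAt f₀ (deriv f₀ y) (g₀ (f₀ y)) := by
      rw [hg₀left y (Ioo_subset_Icc_self hy)]; exact hDf y hy
    have hne : deriv f₀ y ≠ 0 := ne_of_gt (hdf₀pos y (Ioo_subset_Icc_self hy))
    exact (HasDerivAt.of_local_left_inverse hc hfy hne
      (Filter.eventually_of_mem (Icc_mem_nhds ha.1 ha.2) hg₀right)).deriv
  have hg₁d : ∀ y ∈ Ioo (1/2:ℝ) 1, deriv g₁ (f₁ y) = (deriv f₁ y)⁻¹ := by
    intro y hy
    have ha := hf₁mem y hy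
    have hy' : (1 - y) ∈ Ioo (0:ℝ) (1/2) := ⟨by linarith [hy.2], by linarith [hy.1]⟩
    have hc : ContinuousAt g₁ (f₁ y) :=
      hLip₁.continuousOn.continuousAt (Icc_mem_nhds ha.1 ha.2)
    have hfy : HasDerivAt f₁ (deriv f₁ y) (g₁ (f₁ y)) := by
      rw [hg₁left y (Ioo_subset_Icc_self hy), (hDf₁ y hy).deriv]
      exact hDf₁ y hy
    have hne : deriv f₁ y ≠ 0 := by
      rw [(hDf₁ y hy).deriv]
      exact ne_of_gt (hdf₀pos _ (Ioo_subset_Icc_self hy'))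
    exact (HasDerivAt.of_local_left_inverse hc hfy hne
      (Filter.eventually_of_mem (Icc_mem_nhds ha.1 ha.2) hg₁right)).deriv
  -- the PF + balance property and its null exceptional set
  set Q : ℝ → Prop := fun z =>
    ζ z = deriv g₀ z * ζ (g₀ z) + deriv g₁ z * ζ (g₁ z) ∧
    deriv g₀ z * ζ (g₀ z) = deriv g₁ z * ζ (g₁ z) with hQdef
  have hQ : ∀ᵐ z ∂(volume : Measure ℝ), z ∈ Icc (0:ℝ) 1 → Q z :=
    (ae_restrict_iff' measurableSet_Icc).mp (hζPF.and hbal)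
  set N : Set ℝ := {z | ¬ (z ∈ Icc (0:ℝ) 1 → Q z)} with hNdef
  have hN : volume N = 0 := by
    rw [ae_iff] at hQ
    exact hQ
  -- bad set in y
  set BY : Set ℝ := g₀ '' (N ∩ Icc 0 1) ∪ g₁ '' (N ∩ Icc 0 1) ∪ {0, 1/2, 1} with hBYdef
  have hBY : volume BY = 0 := by
    refine measure_union_null (measure_union_null ?_ ?_) ?_
    · exact null_image_of_lipschitzOn hLip₀ hN
    · exact null_image_of_lipschitzOn hLip₁ hN
    · exact (Set.toFinite ({0, 1/2, 1} : Set ℝ)).measure_zero volume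
  -- good-y fact
  have hyfact : ∀ y ∈ Icc (0:ℝ) 1, y ∉ BY →
      (y < 1/2 → deriv f₀ y * ζ (f₀ y) = 2 * ζ y) ∧
      (1/2 ≤ y → deriv f₁ y * ζ (f₁ y) = 2 * ζ y) := by
    intro y hy hyB
    have hy0 : y ≠ 0 := fun h => hyB (Or.inr (by simp [h]))
    have hyh : y ≠ 1/2 := fun h => hyB (Or.inr (by simp [h]))
    have hy1 : y ≠ 1 := fun h => hyB (Or.inr (by simp [h]))
    constructor
    · intro hlt
      have hyo : y ∈ Ioo (0:ℝ) (1/2) := ⟨lt_of_le_of_ne hy.1 (Ne.symm hy0), hlt⟩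
      have hyI : y ∈ Icc (0:ℝ) (1/2) := Ioo_subset_Icc_self hyo
      have hfy : f₀ y ∈ Icc (0:ℝ) 1 := hf₀maps hyI
      have hfyN : f₀ y ∉ N := by
        intro hmem
        exact hyB (Or.inl (Or.inl ⟨f₀ y, ⟨hmem, hfy⟩, hg₀left y hyI⟩))
      have hQfy : Q (f₀ y) := not_not.mp hfyN hfy
      obtain ⟨e1, e2⟩ := hQfy
      rw [hg₀left y hyI, hg₀d y hyo] at e1 e2
      have hne : deriv f₀ y ≠ 0 := ne_of_gt (hdf₀pos y hyI)
      field_simp at e1 e2 ⊢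
      nlinarith [e1, e2]
    · intro hge
      have hyo : y ∈ Ioo (1/2:ℝ) 1 :=
        ⟨lt_of_le_of_ne hge (Ne.symm hyh), lt_of_le_of_ne hy.2 hy1⟩
      have hyI : y ∈ Icc (1/2:ℝ) 1 := Ioo_subset_Icc_self hyo
      have hfy : f₁ y ∈ Icc (0:ℝ) 1 := Ioo_subset_Icc_self (hf₁mem y hyo)
      have hfyN : f₁ y ∉ N := by
        intro hmem
        exact hyB (Or.inl (Or.inr ⟨f₁ y, ⟨hmem, hfy⟩, hg₁left y hyI⟩))
      have hQfy : Q (f₁ y) := not_not.mp hfyN hfy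
      obtain ⟨e1, e2⟩ := hQfy
      rw [hg₁left y hyI, hg₁d y hyo] at e1 e2
      have hne : deriv f₁ y ≠ 0 := by
        rw [(hDf₁ y hyo).deriv]
        exact ne_of_gt (hdf₀pos _ ⟨by linarith [hyo.2], by linarith [hyo.1]⟩)
      field_simp at e1 e2 ⊢
      nlinarith [e1, e2]
  -- assemble
  refine ⟨?_, ?_, ?_⟩
  · rintro ⟨x, y⟩ hp
    exact mul_nonneg (hζpos x hp.1) (hζpos y hp.2)
  · rw [IntegrableOn, Measure.volume_eq_prod, ← Measure.prod_restrict]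
    exact hζint.mul_prod hζint
  · rw [ae_restrict_iff' (measurableSet_Icc.prod measurableSet_Icc)]
    have hE : (volume : Measure (ℝ × ℝ))
        ((N ×ˢ (univ : Set ℝ)) ∪ ((univ : Set ℝ) ×ˢ BY)) = 0 := by
      rw [Measure.volume_eq_prod]
      refine measure_union_null ?_ ?_
      · rw [Measure.prod_prod, hN, zero_mul]
      · rw [Measure.prod_prod, hBY, mul_zero]
    have hae : ∀ᵐ p : ℝ × ℝ ∂volume,
        p ∉ ((N ×ˢ (univ : Set ℝ)) ∪ ((univ : Set ℝ) ×ˢ BY)) :=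
      measure_eq_zero_iff_ae_notMem.mp hE
    filter_upwards [hae] with p hp hpsq
    obtain ⟨hx, hy⟩ := hpsq
    have hxN : p.1 ∉ N := fun h => hp (Or.inl ⟨h, mem_univ _⟩)
    have hyB : p.2 ∉ BY := fun h => hp (Or.inr ⟨mem_univ _, h⟩)
    have hQx : Q p.1 := not_not.mp hxN hx
    obtain ⟨ex1, ex2⟩ := hQx
    obtain ⟨hb0, hb1⟩ := hyfact p.2 hy hyB
    constructor
    · intro h2
      have e3 := hb0 h2
      show ζ p.1 * ζ p.2 = deriv g₀ p.1 * deriv f₀ p.2 * (ζ (g₀ p.1) * ζ (f₀ p.2))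
      linear_combination (deriv f₀ p.2 * ζ (f₀ p.2) / 2) * ex1
        - (deriv f₀ p.2 * ζ (f₀ p.2) / 2) * ex2 - (ζ p.1 / 2) * e3
    · intro h2
      have e3 := hb1 h2
      show ζ p.1 * ζ p.2 = deriv g₁ p.1 * deriv f₁ p.2 * (ζ (g₁ p.1) * ζ (f₁ p.2))
      linear_combination (deriv f₁ p.2 * ζ (f₁ p.2) / 2) * ex1
        + (deriv f₁ p.2 * ζ (f₁ p.2) / 2) * ex2 - (ζ p.1 / 2) * e3
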